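/- Let P_{ζ,θ}(t) := cos(ζ)cos(t) + sin(ζ)cos(3t − θ) for ζ ∈ [0, π/2) and θ ∈ [−π, π). Then every global maximum point of P_{ζ,θ} on [−π, π) lies in the interval [−π/3, π/3]. -/
import Mathlib


open Real

/-- `P_{ζ,θ}(t) = cos ζ · cos t + sin ζ · cos(3t − θ)`. -/
noncomputable def Pfun (ζ θ t : ℝ) : ℝ :=
  Real.cos ζ * Real.cos t + Real.sin ζ * Real.cos (3 * t - θ)

/-- For `ζ ∈ [0, π/2)` and `θ ∈ [−π, π)`, every global maximum point of `P_{ζ,θ}`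
on `[−π, π)` lies in `[−π/3, π/3]`. -/
theorem stmt12 (ζ θ : ℝ) (hζ : ζ ∈ Set.Ico (0 : ℝ) (π / 2))
    (hθ : θ ∈ Set.Ico (-π) π) (t : ℝ) (ht : t ∈ Set.Ico (-π) π)
    (hmax : ∀ u ∈ Set.Ico (-π) π, Pfun ζ θ u ≤ Pfun ζ θ t) :
    t ∈ Set.Icc (-(π / 3)) (π / 3) := by
  have hπ := Real.pi_pos
  have hcosζ : 0 < Real.cos ζ := by
    apply Real.cos_pos_of_mem_Ioo
    constructor <;> [linarith [hζ.1]; exact hζ.2]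
  obtain ⟨htl, htr⟩ := ht
  by_contra hcon
  rw [Set.mem_Icc, not_and_or, not_le, not_le] at hcon
  obtain ht1 | ht1 := hcon
  · -- t < -π/3 : use u = t + 2π/3
    set u := t + 2 * π / 3 with hu
    have hu1 : -(π/3) ≤ u := by simp [hu]; linarith
    have hu2 : u < π/3 := by simp [hu]; linarith
    have humem : u ∈ Set.Ico (-π) π := ⟨by simp [hu]; linarith, by simp [hu]; linarith⟩
    have htrip : Real.cos (3 * u - θ) = Real.cos (3 * t - θ) := by
      have : 3 * u - θ = (3 * t - θ) + 2 * π := by simp [hu]; ring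
      rw [this, Real.cos_add_two_pi]
    have hcos : Real.cos t < Real.cos u := by
      rw [← Real.cos_abs u, ← Real.cos_neg t]
      apply Real.cos_lt_cos_of_nonneg_of_le_pi (abs_nonneg u)
      · linarith
      · rw [abs_lt]; constructor <;> (simp [hu]; linarith)
    have := hmax u humem
    simp only [Pfun, htrip] at this
    nlinarith
  · -- t > π/3 : use u = t - 2π/3
    set u := t - 2 * π / 3 with hu
    have hu1 : -(π/3) < u := by simp [hu]; linarith
    have hu2 : u ≤ π/3 := by simp [hu]; linarith
    have humem : u ∈ Set.Ico (-π) π := ⟨by simp [hu]; linarith, by simp [hu]; linarith⟩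
    have htrip : Real.cos (3 * u - θ) = Real.cos (3 * t - θ) := by
      have : 3 * u - θ = (3 * t - θ) - 2 * π := by simp [hu]; ring
      rw [this, Real.cos_sub_two_pi]
    have hcos : Real.cos t < Real.cos u := by
      rw [← Real.cos_abs u]
      apply Real.cos_lt_cos_of_nonneg_of_le_pi (abs_nonneg u)
      · linarith
      · rw [abs_lt]; constructor <;> (simp [hu]; linarith)
    have := hmax u humem
    simp only [Pfun, htrip] at this
    nlinarith
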